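/- arXiv:2101.02615 — 5 statements merged into one kernel-verified Lean document; each statement's English description precedes it below -/
import Mathlib

section
/- For 0 < p < 1 and integer m ≥ 1, with r = 1-p and D = p - r^m·(p + (m-1)p² - r^(m+1) - p·r), we have D > 0. -/
lemma key_geom (r : ℝ) (h0 : 0 ≤ r) (h1 : r ≤ 1) :
    ∀ n : ℕ, r ^ n * (1 + n * (1 - r)) ≤ 1 := by
  intro n
  induction n with
  | zero => simp
  | succ n ih =>
      have hpow : r ^ (n + 1) = r ^ n * r := pow_succ r n
      push_cast
      rw [hpow]
      nlinarith [pow_nonneg h0 n, sq_nonneg (1 - r),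
        mul_nonneg (pow_nonneg h0 n) (sq_nonneg (1 - r))]

theorem stmt_3 (p : ℝ) (m : ℕ) (hm : 1 ≤ m) (hp : 0 < p) (hp1 : p < 1)
    (r D : ℝ) (hr : r = 1 - p)
    (hD : D = p - r^m * (p + ((m:ℝ)-1)*p^2 - r^(m+1) - p*r)) :
    0 < D := by
  have hr0 : 0 < r := by rw [hr]; linarith
  have hr1 : r ≤ 1 := by rw [hr]; linarith
  have hkey := key_geom r hr0.le hr1 m
  have hpr : 1 - r = p := by rw [hr]; ring
  rw [hpr] at hkey
  have hA : 0 < r ^ m := pow_pos hr0 m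
  have hpow : r ^ (m + 1) = r ^ m * r := pow_succ r m
  rw [hD, hpow, hr]
  rw [hr] at hkey hA
  nlinarith [hkey, hA, mul_pos hp hA, mul_pos (mul_pos hA hA) hr0,
    mul_pos hp (mul_pos hp hA)]
end

section
/- For 0 < p < 1 and integer m ≥ 1, with r = 1-p and D = p - r^m·(p + (m-1)p² - r^(m+1) - p·r), the values π(1) = r^(2m+1)/D, π(m+1) = p·r^(2m)/D, π(e) = p²·r^(3m-e+1)/D for each integer e with m+2 ≤ e ≤ 2m, and π(2m+1) = p·(1 - r^m·(1+(m-1)p))/D sum to 1. -/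
theorem stmt_4 (p : ℝ) (m : ℕ) (hm : 1 ≤ m) (hp : 0 < p) (hp1 : p < 1)
    (r D : ℝ) (hr : r = 1 - p)
    (hD : D = p - r^m * (p + ((m:ℝ)-1)*p^2 - r^(m+1) - p*r)) :
    r^(2*m+1)/D + p*r^(2*m)/D
      + (∑ e ∈ Finset.Icc (m+2) (2*m), p^2 * r^(3*m+1-e) / D)
      + p*(1 - r^m*(1+((m:ℝ)-1)*p))/D = 1 := by
  have hr0 : 0 < r := by rw [hr]; linarith
  have hr1 : r < 1 := by rw [hr]; linarith
  have hrne : r ≠ 1 := ne_of_lt hr1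
  -- compute the middle sum
  have hsum : (∑ e ∈ Finset.Icc (m+2) (2*m), p^2 * r^(3*m+1-e))
      = p*r^(m+1) - p*r^(2*m) := by
    have hIcc : Finset.Icc (m+2) (2*m) = Finset.Ico (m+2) (2*m+1) := by
      rw [Finset.Ico_add_one_right_eq_Icc]
    rw [hIcc, Finset.sum_Ico_eq_sum_range]
    have hb : 2*m + 1 - (m+2) = m - 1 := by omega
    rw [hb]
    have hterm : ∀ i ∈ Finset.range (m-1),
        p^2 * r^(3*m+1-(m+2+i)) = p^2 * r^(2*m-1-i) := by
      intro i hi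
      congr 2
      omega
    rw [Finset.sum_congr rfl hterm, ← Finset.sum_range_reflect]
    have hterm2 : ∀ i ∈ Finset.range (m-1),
        p^2 * r^(2*m-1-(m-1-1-i)) = (p^2 * r^(m+1)) * r^i := by
      intro i hi
      simp only [Finset.mem_range] at hi
      have : 2*m-1-(m-1-1-i) = (m+1) + i := by omega
      rw [this, pow_add]; ring
    rw [Finset.sum_congr rfl hterm2, ← Finset.mul_sum]
    have hS : p * (∑ i ∈ Finset.range (m-1), r^i) = 1 - r^(m-1) := by
      have hgs := geom_sum_mul r (m-1)
      have hp' : r - 1 = -p := by rw [hr]; ring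
      rw [hp'] at hgs
      linarith [hgs]
    have h2m : r^(2*m) = r^(m-1) * r^(m+1) := by
      rw [← pow_add]
      congr 1
      omega
    rw [h2m]
    calc p^2 * r^(m+1) * ∑ i ∈ Finset.range (m-1), r^i
        = p * r^(m+1) * (p * ∑ i ∈ Finset.range (m-1), r^i) := by ring
      _ = p * r^(m+1) * (1 - r^(m-1)) := by rw [hS]
      _ = p*r^(m+1) - p*(r^(m-1)*r^(m+1)) := by ring
  -- D as sum of numerators
  have hDval : D = r^(2*m+1) + p*r^(2*m) + (p*r^(m+1) - p*r^(2*m))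
      + p*(1 - r^m*(1+((m:ℝ)-1)*p)) := by
    rw [hD]
    have h1 : r^(2*m+1) = r^m * r^(m+1) := by rw [← pow_add]; ring_nf
    have h2 : r^(2*m) = r^m * r^m := by rw [← pow_add]; ring_nf
    rw [h1, h2]
    ring
  -- D > 0
  have hmono : r^(2*m) ≤ r^(m+1) :=
    pow_le_pow_of_le_one (le_of_lt hr0) (le_of_lt hr1) (by omega)
  have hlast : r^m * (1+((m:ℝ)-1)*p) ≤ 1 := by
    have hb : 1 + ((m:ℝ)-1)*p ≤ 1 + (m:ℝ)*p := by
      have : (0:ℝ) ≤ p := le_of_lt hp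
      nlinarith
    have hbern : 1 + (m:ℝ)*p ≤ (1+p)^m := one_add_mul_le_pow (by linarith) m
    have h1 : r^m * (1+((m:ℝ)-1)*p) ≤ r^m * (1+p)^m := by
      apply mul_le_mul_of_nonneg_left (le_trans hb hbern) (le_of_lt (pow_pos hr0 m))
    have h2 : r^m * (1+p)^m = (r*(1+p))^m := (mul_pow r (1+p) m).symm
    have h3 : (r*(1+p))^m ≤ 1 := by
      apply pow_le_one₀
      · nlinarith
      · rw [hr]; nlinarith
    linarith
  have hD0 : 0 < D := by
    rw [hDval]
    have h1 : 0 < r^(2*m+1) := pow_pos hr0 _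
    have h2 : 0 ≤ p*r^(2*m) := le_of_lt (mul_pos hp (pow_pos hr0 _))
    have h3 : 0 ≤ p*r^(m+1) - p*r^(2*m) := by nlinarith
    have h4 : 0 ≤ p*(1 - r^m*(1+((m:ℝ)-1)*p)) := by nlinarith
    linarith
  have hDne : D ≠ 0 := ne_of_gt hD0
  have : (∑ e ∈ Finset.Icc (m+2) (2*m), p^2 * r^(3*m+1-e) / D)
      = (∑ e ∈ Finset.Icc (m+2) (2*m), p^2 * r^(3*m+1-e)) / D := by
    rw [Finset.sum_div]
  rw [this, hsum, ← add_div, ← add_div, ← add_div]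
  rw [div_eq_one_iff_eq hDne]
  linarith [hDval]
end

section
/- For 0 < p < 1 and integer m ≥ 1, with r = 1-p, the steady-state values π(1) = r^(2m+1)/D, π(m+1) = p·r^(2m)/D, π(e) = p²·r^(3m-e+1)/D (m+2 ≤ e ≤ 2m), π(2m+1) = p·(1-r^m(1+(m-1)p))/D, where D = p - r^m·(p+(m-1)p²-r^(m+1)-p·r), satisfy the balance equation of state 1: π(1)·p = Σ_{i=m+1}^{2m+1} π(i)·(1-p)^i. -/
theorem stmt_5 (p : ℝ) (m : ℕ) (hm : 1 ≤ m) (hp : 0 < p) (hp1 : p < 1)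
    (r D : ℝ) (hr : r = 1 - p)
    (hD : D = p - r^m * (p + ((m:ℝ)-1)*p^2 - r^(m+1) - p*r))
    (π : ℕ → ℝ)
    (hπ1 : π 1 = r^(2*m+1)/D)
    (hπm1 : π (m+1) = p*r^(2*m)/D)
    (hπe : ∀ e, m+2 ≤ e → e ≤ 2*m → π e = p^2 * r^(3*m+1-e) / D)
    (hπlast : π (2*m+1) = p*(1 - r^m*(1+((m:ℝ)-1)*p))/D) :
    π 1 * p = ∑ i ∈ Finset.Icc (m+1) (2*m+1), π i * (1-p)^i := by
  have h1 : m + 1 ≤ 2*m+1 := by omega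
  have h2 : m + 2 ≤ 2*m+1 := by omega
  rw [Finset.Icc_eq_cons_Ioc h1, Finset.sum_cons, ← Finset.Icc_add_one_left_eq_Ioc,
    show m+1+1 = m+2 from rfl, Finset.Icc_eq_cons_Ico h2, Finset.sum_cons,
    Finset.Ico_add_one_right_eq_Icc]
  have hmid : ∀ e ∈ Finset.Icc (m+2) (2*m), π e * (1-p)^e = p^2 * r^(3*m+1)/D := by
    intro e he
    simp only [Finset.mem_Icc] at he
    have hee : (3*m+1-e) + e = 3*m+1 := by omega
    rw [hπe e he.1 he.2, ← hr, div_mul_eq_mul_div, mul_assoc, ← pow_add, hee]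
  rw [Finset.sum_congr rfl hmid, Finset.sum_const, Nat.card_Icc,
    show 2*m + 1 - (m+2) = m - 1 from by omega, nsmul_eq_mul,
    Nat.cast_sub hm, Nat.cast_one]
  rw [hπ1, hπm1, hπlast, ← hr]
  have e1 : r^(2*m+1) = (r^m)^2 * r := by rw [pow_succ, mul_comm 2 m, pow_mul]
  have e2 : r^(2*m) = (r^m)^2 := by rw [mul_comm 2 m, pow_mul]
  have e3 : r^(3*m+1) = (r^m)^3 * r := by rw [pow_succ, mul_comm 3 m, pow_mul]
  have e4 : r^(m+1) = r^m * r := by rw [pow_succ]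
  rw [e1, e2, e3, e4]
  ring
end

section
/- For 0 < p < 1 and integer m ≥ 1, with r = 1-p, the expected buffer size S := 1·π(1) + Σ_{e=m+1}^{2m+1} e·π(e), computed from the steady-state distribution π(1)=r^(2m+1)/D, π(m+1)=p·r^(2m)/D, π(e)=p²·r^(3m-e+1)/D for m+2 ≤ e ≤ 2m, π(2m+1)=p·(1-r^m(1+(m-1)p))/D with D = p - r^m·(p+(m-1)p²-r^(m+1)-p·r), equals (r^m·(r·(2r^m - 1) - m·p²·(2m+1)) + (2m+1)·p) / D. -/
private lemma shift_sum (f : ℕ → ℝ) (a b : ℕ) :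
    ∑ e ∈ Finset.Icc (a+1) (b+1), f e = ∑ e ∈ Finset.Icc a b, f (e+1) := by
  rw [← Finset.map_add_right_Icc a b 1, Finset.sum_map]
  rfl

private lemma geom_key (p : ℝ) : ∀ m : ℕ, 1 ≤ m →
    p * ∑ e ∈ Finset.Icc (m+2) (2*m), (1-p)^(3*m+1-e) = (1-p)^(m+1) - (1-p)^(2*m) := by
  intro m
  induction m with
  | zero => omega
  | succ n ih =>
    intro hm
    rcases Nat.eq_or_lt_of_le hm with h1 | h1
    · have hn0 : n = 0 := by omega
      subst hn0
      rw [Finset.Icc_eq_empty (by omega)]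
      simp
    · have hn : 1 ≤ n := by omega
      have e1 : 2*(n+1) = (2*n+1)+1 := by ring
      have e2 : (n+1)+2 = (n+2)+1 := by ring
      rw [e1, e2, shift_sum, Finset.sum_Icc_succ_top (by omega : n+2 ≤ 2*n+1)]
      have e3 : ∀ e ∈ Finset.Icc (n+2) (2*n),
          (1-p)^(3*(n+1)+1-(e+1)) = (1-p)^2 * (1-p)^(3*n+1-e) := by
        intro e he
        simp only [Finset.mem_Icc] at he
        rw [← pow_add]
        congr 1
        omega
      rw [Finset.sum_congr rfl e3]
      have e4 : 3*(n+1)+1-(2*n+1+1) = n+2 := by omega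
      rw [e4, ← Finset.mul_sum]
      have hg := ih hn
      linear_combination ((1-p)^2) * hg

private lemma weighted_key (p : ℝ) : ∀ m : ℕ, 1 ≤ m →
    p^2 * ∑ e ∈ Finset.Icc (m+2) (2*m), (e:ℝ) * (1-p)^(3*m+1-e) =
      (1-p)^(2*m+1) - (1-p)^(m+1) + (2*(m:ℝ)+1)*p*(1-p)^m*(1+((m:ℝ)-1)*p)
        - (m:ℝ)*(2*(m:ℝ)+1)*p^2*(1-p)^m - ((m:ℝ)+1)*p*(1-p)^(2*m) := by
  intro m
  induction m with
  | zero => omega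
  | succ n ih =>
    intro hm
    rcases Nat.eq_or_lt_of_le hm with h1 | h1
    · have hn0 : n = 0 := by omega
      subst hn0
      rw [Finset.Icc_eq_empty (by omega)]
      norm_num
      ring
    · have hn : 1 ≤ n := by omega
      have e1 : 2*(n+1) = (2*n+1)+1 := by ring
      have e2 : (n+1)+2 = (n+2)+1 := by ring
      rw [e1, e2, shift_sum, Finset.sum_Icc_succ_top (by omega : n+2 ≤ 2*n+1)]
      have e3 : ∀ e ∈ Finset.Icc (n+2) (2*n),
          ((e+1:ℕ):ℝ) * (1-p)^(3*(n+1)+1-(e+1)) =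
            (1-p)^2 * ((e:ℝ) * (1-p)^(3*n+1-e)) + (1-p)^2 * (1-p)^(3*n+1-e) := by
        intro e he
        simp only [Finset.mem_Icc] at he
        have he2 : 3*(n+1)+1-(e+1) = 2 + (3*n+1-e) := by omega
        rw [he2, pow_add]
        push_cast
        ring
      rw [Finset.sum_congr rfl e3, Finset.sum_add_distrib]
      have e4 : 3*(n+1)+1-(2*n+1+1) = n+2 := by omega
      rw [e4, ← Finset.mul_sum, ← Finset.mul_sum]
      have hg := geom_key p n hn
      have hw := ih hn
      push_cast
      linear_combination ((1-p)^2) * hw + ((1-p)^2 * p) * hg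

theorem stmt_9 (p : ℝ) (m : ℕ) (hm : 1 ≤ m) (hp : 0 < p) (hp1 : p < 1)
    (r D : ℝ) (hr : r = 1 - p)
    (hD : D = p - r^m * (p + ((m:ℝ)-1)*p^2 - r^(m+1) - p*r))
    (π : ℕ → ℝ)
    (hπ1 : π 1 = r^(2*m+1)/D)
    (hπm1 : π (m+1) = p*r^(2*m)/D)
    (hπe : ∀ e, m+2 ≤ e → e ≤ 2*m → π e = p^2 * r^(3*m+1-e) / D)
    (hπlast : π (2*m+1) = p*(1 - r^m*(1+((m:ℝ)-1)*p))/D)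
    (S : ℝ)
    (hS : S = 1 * π 1 + ∑ e ∈ Finset.Icc (m+1) (2*m+1), (e:ℝ) * π e) :
    S = (r^m * (r*(2*r^m - 1) - m*p^2*(2*m+1)) + (2*m+1)*p) / D := by
  subst hr
  have hsplit : Finset.Icc (m+1) (2*m+1) = insert (m+1) (Finset.Icc (m+2) (2*m+1)) := by
    ext x
    simp only [Finset.mem_Icc, Finset.mem_insert]
    omega
  have hnotmem : m+1 ∉ Finset.Icc (m+2) (2*m+1) := by
    simp only [Finset.mem_Icc]
    omega
  rw [hsplit, Finset.sum_insert hnotmem,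
    Finset.sum_Icc_succ_top (by omega : m+2 ≤ 2*m+1)] at hS
  have hmid : ∀ e ∈ Finset.Icc (m+2) (2*m), (e:ℝ) * π e
      = ((e:ℝ) * (p^2 * (1-p)^(3*m+1-e))) / D := by
    intro e he
    simp only [Finset.mem_Icc] at he
    rw [hπe e he.1 he.2]
    ring
  rw [Finset.sum_congr rfl hmid, ← Finset.sum_div, hπ1, hπm1, hπlast] at hS
  rw [hS]
  simp only [one_mul, ← mul_div_assoc, ← add_div]
  congr 1
  have hsum : ∑ e ∈ Finset.Icc (m+2) (2*m), (e:ℝ) * (p^2 * (1-p)^(3*m+1-e))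
      = p^2 * ∑ e ∈ Finset.Icc (m+2) (2*m), (e:ℝ) * (1-p)^(3*m+1-e) := by
    rw [Finset.mul_sum]
    exact Finset.sum_congr rfl fun e _ => by ring
  rw [hsum, weighted_key p m hm]
  push_cast
  ring
end

section
/- For 0 < p < 1 and integer m ≥ 1, with r = 1-p, the steady-state distribution π of the k=2 model (π(1)=r^(2m+1)/D, π(m+1)=p·r^(2m)/D, π(e)=p²·r^(3m-e+1)/D for m+2 ≤ e ≤ 2m, π(2m+1)=p·(1-r^m(1+(m-1)p))/D, D = p - r^m(p+(m-1)p²-r^(m+1)-pr)) assigns a strictly positive probability to every state in {1, m+1, m+2, ..., 2m+1}. -/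
lemma aux_bernoulli (p : ℝ) (hp : 0 ≤ p) (hp1 : p ≤ 1) :
    ∀ n : ℕ, (1-p)^n * (1 + n*p) ≤ 1 := by
  intro n
  induction n with
  | zero => simp
  | succ n ih =>
    have h1 : (0:ℝ) ≤ (1-p)^n := pow_nonneg (by linarith) n
    have h2 : (1-p)^(n+1) = (1-p)^n * (1-p) := pow_succ _ _
    rw [h2]; push_cast
    nlinarith [mul_nonneg h1 (mul_nonneg hp hp)]

theorem stmt_12 (p : ℝ) (m : ℕ) (hm : 1 ≤ m) (hp : 0 < p) (hp1 : p < 1)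
    (r D : ℝ) (hr : r = 1 - p)
    (hD : D = p - r^m * (p + ((m:ℝ)-1)*p^2 - r^(m+1) - p*r)) :
    0 < r^(2*m+1)/D ∧ 0 < p*r^(2*m)/D ∧
    (∀ e : ℕ, m+2 ≤ e → e ≤ 2*m → 0 < p^2 * r^(3*m+1-e) / D) ∧
    0 < p*(1 - r^m*(1+((m:ℝ)-1)*p))/D := by
  have hr0 : 0 < r := by rw [hr]; linarith
  have hrm : 0 < r^m := pow_pos hr0 m
  have key : r^m * (1 + (m:ℝ)*p) ≤ 1 := by
    rw [hr]; exact aux_bernoulli p hp.le hp1.le m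
  have hDval : D = p - (m:ℝ)*p^2*r^m + r^(2*m+1) := by
    rw [hD]
    have h1 : r^(2*m+1) = r^m * r^(m+1) := by
      rw [← pow_add]; congr 1; ring
    have h2 : p*r = p - p^2 := by rw [hr]; ring
    rw [h1, h2]; ring
  have hDpos : 0 < D := by
    have h3 : 0 < r^(2*m+1) := pow_pos hr0 _
    nlinarith [mul_pos hp hrm]
  have hlast : 0 < 1 - r^m*(1+((m:ℝ)-1)*p) := by
    have hm1 : r^(m-1) * (1 + ((m-1:ℕ):ℝ)*p) ≤ 1 := by
      rw [hr]; exact aux_bernoulli p hp.le hp1.le (m-1)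
    have hc : ((m-1:ℕ):ℝ) = (m:ℝ) - 1 := by
      have := Nat.cast_sub hm (R := ℝ); simpa using this
    have hpow : r^m = r * r^(m-1) := by
      rw [← pow_succ']; congr 1; omega
    rw [hc] at hm1
    rw [hpow]
    have hr1 : r < 1 := by rw [hr]; linarith
    have h0 : 0 < r^(m-1) := pow_pos hr0 _
    nlinarith
  refine ⟨by positivity, by positivity, fun e _ _ => by positivity,
    div_pos (mul_pos hp hlast) hDpos⟩
end
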